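/- Let c = 0.47521, d = 0.60138 and μ̄ = 2 + ln(d)/(1-d). Then c·ln(d/c) + (c/d)·((1-d)·μ̄ + (1-d-ln(1/d))·ln(1/(1-μ̄)) - 2 + 2d + ln(1/d)) ≥ 0. -/
import Mathlib

open Finset

/-- Two-sided series bound for `log (1-x)`. -/
lemma log_one_sub_bounds (x : ℝ) (n : ℕ) (h0 : 0 ≤ x) (h1 : x < 1) :
    -(∑ i ∈ range n, x ^ (i + 1) / (i + 1)) - x ^ (n + 1) / (1 - x) ≤ Real.log (1 - x) ∧
    Real.log (1 - x) ≤ -(∑ i ∈ range n, x ^ (i + 1) / (i + 1)) + x ^ (n + 1) / (1 - x) := by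
  have hx : |x| < 1 := by rwa [abs_of_nonneg h0]
  have h := Real.abs_log_sub_add_sum_range_le hx n
  rw [abs_of_nonneg h0] at h
  rcases abs_le.mp h with ⟨h2, h3⟩
  constructor <;> linarith

lemma logd_bounds :
    (-0.5085282657 : ℝ) ≤ Real.log 0.60138 ∧ Real.log 0.60138 ≤ -0.5085282638 := by
  have hx : Real.log (0.60138 : ℝ) = -Real.log 2 - Real.log (1 - 5069/30069) := by
    rw [show (0.60138 : ℝ) = 2⁻¹ * (1 - (5069 : ℝ)/30069)⁻¹ by norm_num,
      Real.log_mul (by norm_num) (by norm_num), Real.log_inv, Real.log_inv]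
    ring
  obtain ⟨h1, h2⟩ := log_one_sub_bounds (5069/30069) 11 (by norm_num) (by norm_num)
  have l2a := Real.log_two_gt_d9
  have l2b := Real.log_two_lt_d9
  rw [hx]
  norm_num [Finset.sum_range_succ] at h1 h2 ⊢
  constructor <;> linarith

lemma logdc_bound : (0.2354702022 : ℝ) ≤ Real.log (0.60138 / 0.47521) := by
  have hx : Real.log (0.60138 / 0.47521 : ℝ) = -Real.log (1 - 12617/60138) := by
    rw [show (0.60138 / 0.47521 : ℝ) = (1 - (12617 : ℝ)/60138)⁻¹ by norm_num,
      Real.log_inv]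
  obtain ⟨h1, h2⟩ := log_one_sub_bounds (12617/60138) 13 (by norm_num) (by norm_num)
  rw [hx]
  norm_num [Finset.sum_range_succ] at h1 h2 ⊢
  linarith

lemma logs_bound : Real.log 0.39862 ≤ (-0.919746695 : ℝ) := by
  have hx : Real.log (0.39862 : ℝ) = -Real.log 2 + Real.log (1 - 5069/25000) := by
    rw [show (0.39862 : ℝ) = 2⁻¹ * (1 - (5069 : ℝ)/25000) by norm_num,
      Real.log_mul (by norm_num) (by norm_num), Real.log_inv]
  obtain ⟨h1, h2⟩ := log_one_sub_bounds (5069/25000) 12 (by norm_num) (by norm_num)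
  have l2a := Real.log_two_gt_d9
  rw [hx]
  norm_num [Finset.sum_range_succ] at h1 h2 ⊢
  linarith

lemma loga_bound : (-2.208109809 : ℝ) ≤ Real.log 0.1099082 := by
  have hx : Real.log (0.1099082 : ℝ) = -(3 * Real.log 2) + Real.log (1 - 75459/625000) := by
    rw [show (0.1099082 : ℝ) = (2 ^ 3)⁻¹ * (1 - (75459 : ℝ)/625000) by norm_num,
      Real.log_mul (by norm_num) (by norm_num), Real.log_inv, Real.log_pow]
    push_cast; ring
  obtain ⟨h1, h2⟩ := log_one_sub_bounds (75459/625000) 9 (by norm_num) (by norm_num)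
  have l2b := Real.log_two_lt_d9
  rw [hx]
  norm_num [Finset.sum_range_succ] at h1 h2 ⊢
  linarith

theorem stmt_18 :
    let c : ℝ := 0.47521
    let d : ℝ := 0.60138
    let μbar : ℝ := 2 + Real.log d / (1 - d)
    0 ≤ c * Real.log (d / c) + (c / d) * ((1 - d) * μbar
        + (1 - d - Real.log (1 / d)) * Real.log (1 / (1 - μbar))
        - 2 + 2 * d + Real.log (1 / d)) := by
  intro c d μbar
  have hc : c = 0.47521 := rfl
  have hd : d = 0.60138 := rfl
  set L : ℝ := Real.log 0.60138 with hL
  have hμ : μbar = 2 + L / 0.39862 := by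
    show (2 : ℝ) + Real.log d / (1 - d) = 2 + L / 0.39862
    rw [hd, ← hL, show (1 : ℝ) - 0.60138 = 0.39862 by norm_num]
  obtain ⟨hL1, hL2⟩ := logd_bounds
  rw [← hL] at hL1 hL2
  -- A := -0.39862 - L, satisfies 0.1099082 ≤ A ≤ 0.1099083
  set A : ℝ := -0.39862 - L with hA
  have hA1 : (0.1099082 : ℝ) ≤ A := by rw [hA]; linarith
  have hA2 : A ≤ (0.1099083 : ℝ) := by rw [hA]; linarith
  have hApos : (0 : ℝ) < A := lt_of_lt_of_le (by norm_num) hA1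
  -- log (1/d) = -L
  have hlog1d : Real.log (1 / d) = -L := by
    rw [hd, one_div, Real.log_inv]
  -- 1 - μbar = A / 0.39862, so 1/(1-μbar) = 0.39862 / A
  have e1 : 1 - μbar = A / 0.39862 := by
    rw [hμ, hA]; field_simp; ring
  have hμ2 : 1 / (1 - μbar) = 0.39862 / A := by
    rw [e1, one_div_div]
  set M : ℝ := Real.log (1 / (1 - μbar)) with hM
  have hMval : M = Real.log 0.39862 - Real.log A := by
    rw [hM, hμ2, Real.log_div (by norm_num) (ne_of_gt hApos)]
  -- bounds on M
  have hMub : M ≤ 1.288363114 := by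
    have h1 : Real.log 0.1099082 ≤ Real.log A :=
      Real.log_le_log (by norm_num) hA1
    have h2 := logs_bound
    have h3 := loga_bound
    rw [hMval]; linarith
  have hMnn : 0 ≤ M := by
    rw [hMval]
    have : Real.log A ≤ Real.log 0.39862 :=
      Real.log_le_log hApos (by linarith)
    linarith
  -- key algebraic simplification
  have key : (1 - d) * μbar + (1 - d - Real.log (1 / d)) * M
      - 2 + 2 * d + Real.log (1 / d) = -A * M := by
    rw [hμ, hlog1d, hd, hA]
    field_simp
    ring
  have hAM : A * M ≤ 0.1099083 * 1.288363114 :=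
    mul_le_mul hA2 hMub hMnn (by norm_num)
  have hcd : c / d = 0.47521 / 0.60138 := by rw [hc, hd]
  rw [key, hcd, hc, hd]
  nlinarith [hAM, logdc_bound]
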